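/- arXiv:1609.05267 — 8 statements merged into one kernel-verified Lean document; each statement's English description precedes it below -/
import Mathlib

section
/- Let f : ℝⁿ → ℝⁿ be a polynomial map with f(0) = 0, degree m−1 (m ≥ 2) and leading term f^∞. If SOL(f^∞, 0) = {0}, then for every bounded set K ⊆ ℝⁿ the set ⋃_{q ∈ K} SOL(f, q) is bounded. -/
open Finset

/-- The solution set of the (nonlinear/polynomial) complementarity problem for the map `g`
and vector `q`: all `x ≥ 0` with `g x + q ≥ 0` and `⟨x, g x + q⟩ = 0`. -/
def SOL {n : ℕ} (g : (Fin n → ℝ) → (Fin n → ℝ)) (q : Fin n → ℝ) : Set (Fin n → ℝ) :=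
  {x | (∀ i, 0 ≤ x i) ∧ (∀ i, 0 ≤ g x i + q i) ∧ ∑ i, x i * (g x i + q i) = 0}

/-- `F` is a polynomial map each of whose components is homogeneous of degree `d`. -/
def IsHomogPolyMap {n : ℕ} (F : (Fin n → ℝ) → (Fin n → ℝ)) (d : ℕ) : Prop :=
  ∃ P : Fin n → MvPolynomial (Fin n) ℝ,
    (∀ x i, F x i = MvPolynomial.eval x (P i)) ∧ ∀ i, (P i).IsHomogeneous d

/-- `p` is a polynomial map each of whose components has total degree `< d`. -/
def IsPolyMapDegLT {n : ℕ} (p : (Fin n → ℝ) → (Fin n → ℝ)) (d : ℕ) : Prop :=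
  ∃ P : Fin n → MvPolynomial (Fin n) ℝ,
    (∀ x i, p x i = MvPolynomial.eval x (P i)) ∧ ∀ i, (P i).totalDegree < d

open MvPolynomial Filter Topology

private lemma my_eval_smul_homog {n : ℕ} (P : MvPolynomial (Fin n) ℝ) {d : ℕ}
    (h : P.IsHomogeneous d) (c : ℝ) (x : Fin n → ℝ) :
    eval (c • x) P = c ^ d * eval x P := by
  rw [eval_eq', eval_eq', Finset.mul_sum]
  refine Finset.sum_congr rfl fun s hs => ?_
  have hdeg : ∑ i, s i = d := by
    have h1 := h (mem_support_iff.mp hs)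
    rw [Finsupp.weight_apply] at h1
    rw [← h1, Finsupp.sum]
    rw [Finset.sum_subset (Finset.subset_univ s.support)]
    · simp
    · intro i _ hi
      simp [Finsupp.notMem_support_iff.mp hi]
  calc P.coeff s * ∏ i, (c • x) i ^ s i
      = P.coeff s * ∏ i, (c ^ s i * x i ^ s i) := by
        simp [mul_pow]
    _ = P.coeff s * ((∏ i, c ^ s i) * ∏ i, x i ^ s i) := by
        rw [Finset.prod_mul_distrib]
    _ = c ^ d * (P.coeff s * ∏ i, x i ^ s i) := by
        rw [Finset.prod_pow_eq_pow_sum, hdeg]; ring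

private lemma my_eval_bound {n : ℕ} (P : MvPolynomial (Fin n) ℝ) (x : Fin n → ℝ) :
    |eval x P| ≤ (∑ s ∈ P.support, |P.coeff s|) * max 1 ‖x‖ ^ P.totalDegree := by
  rw [eval_eq', Finset.sum_mul]
  refine (Finset.abs_sum_le_sum_abs _ _).trans (Finset.sum_le_sum fun s hs => ?_)
  rw [abs_mul]
  refine mul_le_mul_of_nonneg_left ?_ (abs_nonneg _)
  have h1 : |∏ i, x i ^ s i| ≤ max 1 ‖x‖ ^ ∑ i, s i := by
    rw [abs_prod, ← Finset.prod_pow_eq_pow_sum]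
    refine Finset.prod_le_prod (fun _ _ => abs_nonneg _) fun i _ => ?_
    rw [abs_pow]
    exact pow_le_pow_left₀ (abs_nonneg _)
      ((norm_le_pi_norm x i).trans (le_max_right _ _)) _
  refine h1.trans (pow_le_pow_right₀ (le_max_left _ _) ?_)
  have := le_totalDegree hs
  rw [Finsupp.sum] at this
  refine le_trans (le_of_eq ?_) this
  rw [Finset.sum_subset (Finset.subset_univ s.support)]
  intro i _ hi
  simp [Finsupp.notMem_support_iff.mp hi]

theorem stmt_0 {n m : ℕ} (hm : 2 ≤ m)
    (f F : (Fin n → ℝ) → (Fin n → ℝ))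
    (hF : IsHomogPolyMap F (m - 1)) (hFne : F ≠ 0)
    (hp : IsPolyMapDegLT (fun x => f x - F x) (m - 1))
    (hf0 : f 0 = 0)
    (hSOL : SOL F 0 = {0}) :
    ∀ K : Set (Fin n → ℝ), Bornology.IsBounded K →
      Bornology.IsBounded (⋃ q ∈ K, SOL f q) := by
  obtain ⟨P, hPe, hPh⟩ := hF
  obtain ⟨Q, hQe, hQd⟩ := hp
  have hQe' : ∀ (x : Fin n → ℝ) (i : Fin n), f x i - F x i = eval x (Q i) := by
    intro x i
    have := hQe x i
    simpa using this
  intro K hK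
  by_contra hB
  obtain ⟨R, hR⟩ := isBounded_iff_forall_norm_le.mp hK
  rw [isBounded_iff_forall_norm_le] at hB
  push_neg at hB
  have key : ∀ k : ℕ, ∃ x q, q ∈ K ∧ ((∀ i, 0 ≤ x i) ∧ (∀ i, 0 ≤ f x i + q i) ∧
      ∑ i, x i * (f x i + q i) = 0) ∧ (k : ℝ) + 1 < ‖x‖ := by
    intro k
    obtain ⟨x, hxU, hx⟩ := hB ((k : ℝ) + 1)
    simp only [Set.mem_iUnion, SOL, Set.mem_setOf_eq] at hxU
    obtain ⟨q, hqK, hsol⟩ := hxU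
    exact ⟨x, q, hqK, hsol, hx⟩
  choose x q hqK hsol hnorm using key
  set t : ℕ → ℝ := fun k => ‖x k‖ with ht_def
  have ht1 : ∀ k, 1 < t k := by
    intro k
    have h1 : (0:ℝ) ≤ (k:ℝ) := Nat.cast_nonneg k
    have := hnorm k
    simp only [ht_def]
    linarith
  have htpos : ∀ k, 0 < t k := fun k => lt_trans one_pos (ht1 k)
  have htne : ∀ k, t k ≠ 0 := fun k => (htpos k).ne'
  set y : ℕ → Fin n → ℝ := fun k => (t k)⁻¹ • x k with hy_def
  have hxy : ∀ k, x k = t k • y k := by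
    intro k
    rw [hy_def]
    simp [smul_smul, mul_inv_cancel₀ (htne k)]
  have hy_sphere : ∀ k, y k ∈ Metric.sphere (0 : Fin n → ℝ) 1 := by
    intro k
    rw [mem_sphere_zero_iff_norm, hy_def]
    simp only [norm_smul, norm_inv, Real.norm_eq_abs, abs_of_pos (htpos k)]
    exact inv_mul_cancel₀ (htne k)
  obtain ⟨y₀, hy₀s, φ, hφmono, hφtend⟩ :=
    (isCompact_sphere (0 : Fin n → ℝ) 1).tendsto_subseq hy_sphere
  -- error terms
  set e : ℕ → Fin n → ℝ := fun k i => (eval (x k) (Q i) + q k i) / t k ^ (m-1) with he_def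
  have hRnn : 0 ≤ R := le_trans (norm_nonneg _) (hR _ (hqK 0))
  have hqi : ∀ k i, |q k i| ≤ R := by
    intro k i
    exact le_trans (norm_le_pi_norm (q k) i) (hR _ (hqK k))
  have hm1 : m - 1 = (m - 2) + 1 := by omega
  have he_bound : ∀ i, ∀ k, |e k i| ≤
      ((∑ s ∈ (Q i).support, |(Q i).coeff s|) + R) / ((k:ℝ) + 1) := by
    intro i k
    set C := ∑ s ∈ (Q i).support, |(Q i).coeff s| with hC
    have hCnn : 0 ≤ C := Finset.sum_nonneg fun _ _ => abs_nonneg _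
    have hmax : max 1 ‖x k‖ = t k := max_eq_right (ht1 k).le
    have hp1 : (1:ℝ) ≤ t k ^ (m-2) := one_le_pow₀ (ht1 k).le
    have h1 : |eval (x k) (Q i)| ≤ C * t k ^ (m-2) := by
      refine (my_eval_bound (Q i) (x k)).trans ?_
      rw [hmax]
      exact mul_le_mul_of_nonneg_left
        (pow_le_pow_right₀ (ht1 k).le (by have := hQd i; omega : (Q i).totalDegree ≤ m - 2)) hCnn
    have hnum : |eval (x k) (Q i) + q k i| ≤ (C + R) * t k ^ (m-2) := by
      calc |eval (x k) (Q i) + q k i| ≤ |eval (x k) (Q i)| + |q k i| := abs_add_le _ _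
        _ ≤ C * t k ^ (m-2) + R := add_le_add h1 (hqi k i)
        _ ≤ C * t k ^ (m-2) + R * t k ^ (m-2) := by nlinarith
        _ = (C + R) * t k ^ (m-2) := by ring
    have hpow : t k ^ (m-1) = t k ^ (m-2) * t k := by rw [hm1, pow_succ]
    have h2 : |e k i| ≤ (C + R) / t k := by
      rw [he_def]
      simp only [abs_div, abs_of_pos (pow_pos (htpos k) (m-1))]
      rw [hpow]
      rw [div_le_div_iff₀ (mul_pos (pow_pos (htpos k) _) (htpos k)) (htpos k)]
      calc |eval (x k) (Q i) + q k i| * t k ≤ ((C + R) * t k ^ (m-2)) * t k :=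
            mul_le_mul_of_nonneg_right hnum (htpos k).le
        _ = (C + R) * (t k ^ (m-2) * t k) := by ring
    refine h2.trans (div_le_div_of_nonneg_left (by positivity) (by positivity) ?_)
    linarith [hnorm k]
  have he_tend : ∀ i, Tendsto (fun k => e k i) atTop (𝓝 0) := by
    intro i
    refine squeeze_zero_norm (fun k => he_bound i k) ?_
    have h1 := tendsto_const_div_atTop_nhds_zero_nat
      ((∑ s ∈ (Q i).support, |(Q i).coeff s|) + R)
    have h2 := h1.comp (tendsto_add_atTop_nat 1)
    refine h2.congr fun k => ?_
    simp only [Function.comp_apply]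
    push_cast
    ring
  -- normalized complementarity
  have hval : ∀ k i, f (x k) i + q k i =
      t k ^ (m-1) * eval (y k) (P i) + (eval (x k) (Q i) + q k i) := by
    intro k i
    have h1 : f (x k) i - F (x k) i = eval (x k) (Q i) := hQe' (x k) i
    have h2 : F (x k) i = t k ^ (m-1) * eval (y k) (P i) := by
      rw [hPe, hxy k, my_eval_smul_homog (P i) (hPh i)]
    linarith
  have hg_eq : ∀ k i, (f (x k) i + q k i) / t k ^ (m-1) = eval (y k) (P i) + e k i := by
    intro k i
    rw [hval k i, he_def, add_div, mul_div_cancel_left₀ _ (pow_ne_zero _ (htne k))]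
  have hg_nonneg : ∀ k i, 0 ≤ eval (y k) (P i) + e k i := by
    intro k i
    rw [← hg_eq]
    exact div_nonneg ((hsol k).2.1 i) (pow_nonneg (htpos k).le _)
  have hsum0 : ∀ k, ∑ i, y k i * (eval (y k) (P i) + e k i) = 0 := by
    intro k
    have h1 : ∀ i, y k i * (eval (y k) (P i) + e k i) =
        x k i * (f (x k) i + q k i) / (t k * t k ^ (m-1)) := by
      intro i
      rw [← hg_eq, hy_def]
      simp only [Pi.smul_apply, smul_eq_mul]
      field_simp
    rw [Finset.sum_congr rfl fun i _ => h1 i, ← Finset.sum_div, (hsol k).2.2, zero_div]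
  -- limits
  have hytend : ∀ i, Tendsto (fun k => y (φ k) i) atTop (𝓝 (y₀ i)) :=
    fun i => ((continuous_apply i).tendsto y₀).comp hφtend
  have hPtend : ∀ i, Tendsto (fun k => eval (y (φ k)) (P i)) atTop (𝓝 (eval y₀ (P i))) :=
    fun i => ((MvPolynomial.continuous_eval (p := P i)).tendsto y₀).comp hφtend
  have hetend : ∀ i, Tendsto (fun k => e (φ k) i) atTop (𝓝 0) :=
    fun i => (he_tend i).comp hφmono.tendsto_atTop
  have hy₀nn : ∀ i, 0 ≤ y₀ i := by
    intro i
    refine ge_of_tendsto' (hytend i) fun k => ?_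
    rw [hy_def]
    simp only [Pi.smul_apply, smul_eq_mul]
    exact mul_nonneg (inv_nonneg.mpr (htpos _).le) ((hsol _).1 i)
  have hF0 : ∀ i, 0 ≤ eval y₀ (P i) := by
    intro i
    have h1 : Tendsto (fun k => eval (y (φ k)) (P i) + e (φ k) i) atTop
        (𝓝 (eval y₀ (P i) + 0)) := (hPtend i).add (hetend i)
    rw [add_zero] at h1
    exact ge_of_tendsto' h1 fun k => hg_nonneg (φ k) i
  have hsum : ∑ i, y₀ i * eval y₀ (P i) = 0 := by
    have h1 : Tendsto (fun k => ∑ i, y (φ k) i * (eval (y (φ k)) (P i) + e (φ k) i)) atTop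
        (𝓝 (∑ i, y₀ i * (eval y₀ (P i) + 0))) :=
      tendsto_finset_sum _ fun i _ => (hytend i).mul ((hPtend i).add (hetend i))
    have h2 : Tendsto (fun _ : ℕ => (0:ℝ)) atTop (𝓝 (∑ i, y₀ i * (eval y₀ (P i) + 0))) :=
      h1.congr fun k => by rw [hsum0]
    have h3 := tendsto_nhds_unique h2 tendsto_const_nhds
    simpa using h3
  have hy₀mem : y₀ ∈ SOL F 0 := by
    refine ⟨hy₀nn, fun i => ?_, ?_⟩
    · simp only [Pi.zero_apply, add_zero, hPe]
      exact hF0 i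
    · simp only [Pi.zero_apply, add_zero]
      rw [Finset.sum_congr rfl fun i _ => by rw [hPe y₀ i]]
      exact hsum
  rw [hSOL] at hy₀mem
  have h1 : ‖y₀‖ = 1 := mem_sphere_zero_iff_norm.mp hy₀s
  rw [Set.mem_singleton_iff.mp hy₀mem] at h1
  simp at h1
end

section
/- Let F : ℝⁿ → ℝⁿ be a homogeneous polynomial map, let k be an odd natural number, and define G : ℝⁿ → ℝⁿ by G(x) = F(x)^{[k]} (componentwise k-th power). Then for every q ∈ ℝⁿ, SOL(G, q) = SOL(F, q^{[1/k]}). In particular, SOL(G, 0) = SOL(F, 0). -/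
open Finset

lemma odd_pow_add_nonneg_iff {k : ℕ} (hk : Odd k) (a b : ℝ) :
    0 ≤ a ^ k + b ^ k ↔ 0 ≤ a + b := by
  rw [← neg_le_iff_add_nonneg, ← hk.neg_pow,
    (hk.strictMono_pow (R := ℝ)).le_iff_le, neg_le_iff_add_nonneg]

lemma odd_pow_add_eq_zero_iff {k : ℕ} (hk : Odd k) (a b : ℝ) :
    a ^ k + b ^ k = 0 ↔ a + b = 0 := by
  rw [add_eq_zero_iff_eq_neg, ← hk.neg_pow,
    (hk.strictMono_pow (R := ℝ)).injective.eq_iff, ← add_eq_zero_iff_eq_neg]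

lemma sol_pow_eq {n k : ℕ} (hk : Odd k) (F : (Fin n → ℝ) → (Fin n → ℝ))
    (q q' : Fin n → ℝ) (hq : ∀ i, q' i ^ k = q i) :
    SOL (fun x i => F x i ^ k) q = SOL F q' := by
  ext x
  simp only [SOL, Set.mem_setOf_eq]
  constructor <;> rintro ⟨hx, hpos, hsum⟩
  · have hpos' : ∀ i, 0 ≤ F x i + q' i := fun i => by
      have := hpos i; rw [← hq i] at this
      exact (odd_pow_add_nonneg_iff hk _ _).mp this
    refine ⟨hx, hpos', ?_⟩
    rw [Finset.sum_eq_zero_iff_of_nonneg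
      (fun i _ => mul_nonneg (hx i) (hpos' i))]
    rw [Finset.sum_eq_zero_iff_of_nonneg
      (fun i _ => mul_nonneg (hx i) (hpos i))] at hsum
    intro i hi
    have h := hsum i hi
    rcases mul_eq_zero.mp h with h | h
    · simp [h]
    · rw [← hq i] at h
      rw [(odd_pow_add_eq_zero_iff hk _ _).mp h, mul_zero]
  · have hpos' : ∀ i, 0 ≤ F x i ^ k + q i := fun i => by
      rw [← hq i]; exact (odd_pow_add_nonneg_iff hk _ _).mpr (hpos i)
    refine ⟨hx, hpos', ?_⟩
    rw [Finset.sum_eq_zero_iff_of_nonneg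
      (fun i _ => mul_nonneg (hx i) (hpos' i))]
    rw [Finset.sum_eq_zero_iff_of_nonneg
      (fun i _ => mul_nonneg (hx i) (hpos i))] at hsum
    intro i hi
    have h := hsum i hi
    rcases mul_eq_zero.mp h with h | h
    · simp [h]
    · rw [← hq i, (odd_pow_add_eq_zero_iff hk _ _).mpr h, mul_zero]

/-- For a homogeneous polynomial map `F` and odd `k`, with `G x = (F x)^{[k]}`
(componentwise `k`-th power), `SOL(G, q) = SOL(F, q^{[1/k]})` for every `q`
(the `k`-th root `q'` of `q` is characterized by `q'^{[k]} = q`);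
in particular `SOL(G, 0) = SOL(F, 0)`. -/
theorem stmt_5 {n d k : ℕ} (hd : 1 ≤ d) (hk : Odd k)
    (F : (Fin n → ℝ) → (Fin n → ℝ)) (hF : IsHomogPolyMap F d) :
    (∀ q q' : Fin n → ℝ, (∀ i, q' i ^ k = q i) →
      SOL (fun x i => F x i ^ k) q = SOL F q') ∧
    SOL (fun x i => F x i ^ k) 0 = SOL F 0 := by
  refine ⟨fun q q' hq => sol_pow_eq hk F q q' hq, ?_⟩
  exact sol_pow_eq hk F 0 0 (fun i => by simp [zero_pow hk.pos.ne'])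
end

section
/- Let A ∈ ℝ^{n×n}, let k be an odd natural number, and define G : ℝⁿ → ℝⁿ by G(x) = (Ax)^{[k]} (componentwise k-th power of Ax). Then the set {q ∈ ℝⁿ : SOL(G, q) ≠ ∅} is closed in ℝⁿ. -/
open Finset

lemma cone_reduce {m n : ℕ} (B : Matrix (Fin n) (Fin m) ℝ) (y c : Fin m → ℝ)
    (hy : ∀ i, 0 ≤ y i) (hsupp : ∀ i, c i ≠ 0 → y i ≠ 0) (hBc : B.mulVec c = 0)
    (i0 : Fin m) (hi0 : 0 < c i0) :
    ∃ y' : Fin m → ℝ, (∀ i, 0 ≤ y' i) ∧ B.mulVec y' = B.mulVec y ∧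
      Finset.filter (fun i => y' i ≠ 0) Finset.univ ⊂
        Finset.filter (fun i => y i ≠ 0) Finset.univ := by
  classical
  obtain ⟨j, hjT, hjmin⟩ := (Finset.filter (fun i => 0 < c i) Finset.univ).exists_min_image
    (fun i => y i / c i) ⟨i0, by simp [hi0]⟩
  have hcj : 0 < c j := (Finset.mem_filter.mp hjT).2
  have ht0 : 0 ≤ y j / c j := div_nonneg (hy j) hcj.le
  refine ⟨fun i => y i - (y j / c j) * c i, ?_, ?_, ?_⟩
  · intro i
    dsimp only
    rcases le_or_gt (c i) 0 with h | h
    · nlinarith [hy i, mul_nonpos_of_nonneg_of_nonpos ht0 h]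
    · have h1 : y j / c j ≤ y i / c i := hjmin i (by simp [h])
      have h2 : y j / c j * c i ≤ y i := (le_div_iff₀ h).mp h1
      linarith
  · have heq : (fun i => y i - (y j / c j) * c i) = y - (y j / c j) • c := by
      funext i; simp [mul_comm]
    rw [heq, Matrix.mulVec_sub, Matrix.mulVec_smul, hBc]
    simp
  · constructor
    · intro i hi
      simp only [Finset.mem_filter, Finset.mem_univ, true_and] at hi ⊢
      intro h0
      rcases eq_or_ne (c i) 0 with hc | hc
      · simp [h0, hc] at hi
      · exact hsupp i hc h0
    · intro hsub
      have hyj : y j ≠ 0 := hsupp j hcj.ne'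
      have hj' : j ∈ Finset.filter (fun i => y i ≠ 0) Finset.univ := by simp [hyj]
      have := hsub hj'
      simp only [Finset.mem_filter, Finset.mem_univ, true_and] at this
      apply this
      field_simp
      ring


lemma cone_carath {m n : ℕ} (B : Matrix (Fin n) (Fin m) ℝ) :
    ∀ (N : ℕ) (y : Fin m → ℝ), (∀ i, 0 ≤ y i) →
      (Finset.filter (fun i => y i ≠ 0) Finset.univ).card ≤ N →
      ∃ (σ : Finset (Fin m)) (z : Fin m → ℝ), (∀ i, 0 ≤ z i) ∧ (∀ i ∉ σ, z i = 0) ∧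
        B.mulVec z = B.mulVec y ∧
        LinearIndependent ℝ (fun i : σ => fun r => B r (i : Fin m)) := by
  classical
  intro N
  induction N using Nat.strong_induction_on with
  | _ N IH =>
  intro y hy hcard
  set σ0 := Finset.filter (fun i => y i ≠ 0) Finset.univ with hσ0
  by_cases hLI : LinearIndependent ℝ (fun i : σ0 => fun r => B r (i : Fin m))
  · exact ⟨σ0, y, hy, fun i hi => by simpa [hσ0] using hi, rfl, hLI⟩
  · obtain ⟨g, hg0, i1, hi1⟩ := Fintype.not_linearIndependent_iff.mp hLI
    set c : Fin m → ℝ := fun i => if h : i ∈ σ0 then g ⟨i, h⟩ else 0 with hc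
    have hBc : B.mulVec c = 0 := by
      funext r
      have h0 := congrFun hg0 r
      simp only [Finset.sum_apply, Pi.smul_apply, smul_eq_mul, Pi.zero_apply] at h0
      show ∑ j, B r j * c j = 0
      calc ∑ j, B r j * c j
          = ∑ j ∈ σ0, B r j * c j :=
            (Finset.sum_subset (Finset.subset_univ σ0)
              (fun j _ hj => by simp [hc, hj])).symm
        _ = ∑ x : σ0, B r (x : Fin m) * c (x : Fin m) := (Finset.sum_coe_sort σ0 _).symm
        _ = ∑ x : σ0, g x * B r (x : Fin m) := by
            refine Finset.sum_congr rfl fun x _ => ?_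
            simp [hc, x.2, mul_comm]
        _ = 0 := h0
    have hsupp : ∀ i, c i ≠ 0 → y i ≠ 0 := by
      intro i hci
      by_contra h0
      apply hci
      simp [hc, hσ0, h0]
    have hne : c (i1 : Fin m) ≠ 0 := by simpa [hc, i1.2] using hi1
    obtain ⟨y', hy', hBy', hss⟩ :
        ∃ y' : Fin m → ℝ, (∀ i, 0 ≤ y' i) ∧ B.mulVec y' = B.mulVec y ∧
          Finset.filter (fun i => y' i ≠ 0) Finset.univ ⊂ σ0 := by
      rcases hne.lt_or_gt with h | h
      · refine cone_reduce B y (-c) hy (fun i hci => hsupp i (by simpa using hci))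
          (by simp [Matrix.mulVec_neg, hBc]) (i1 : Fin m) (by simpa using h)
      · exact cone_reduce B y c hy hsupp hBc (i1 : Fin m) h
    have hlt : (Finset.filter (fun i => y' i ≠ 0) Finset.univ).card < N :=
      lt_of_lt_of_le (Finset.card_lt_card hss) hcard
    obtain ⟨σ, z, h1, h2, h3, h4⟩ := IH _ hlt y' hy' le_rfl
    exact ⟨σ, z, h1, h2, h3.trans hBy', h4⟩


lemma isClosed_cone {m n : ℕ} (B : Matrix (Fin n) (Fin m) ℝ) :
    IsClosed {p : Fin n → ℝ | ∃ y, (∀ i, 0 ≤ y i) ∧ B.mulVec y = p} := by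
  classical
  -- the linear map from weights on σ
  let v : (σ : Finset (Fin m)) → ({x // x ∈ σ} → (Fin n → ℝ)) := fun σ i => fun r => B r (i : Fin m)
  let L : (σ : Finset (Fin m)) → (({x // x ∈ σ} → ℝ) →ₗ[ℝ] (Fin n → ℝ)) := fun σ =>
    Fintype.linearCombination ℝ (v σ)
  have hLval : ∀ (σ : Finset (Fin m)) (g : {x // x ∈ σ} → ℝ) (r : Fin n),
      L σ g r = ∑ i : {x // x ∈ σ}, g i * B r (i : Fin m) := by
    intro σ g r
    show (∑ i, g i • v σ i) r = _
    simp [v, Finset.sum_apply]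
  have key : {p : Fin n → ℝ | ∃ y, (∀ i, 0 ≤ y i) ∧ B.mulVec y = p} =
      ⋃ (σ : Finset (Fin m)) (_ : LinearIndependent ℝ (v σ)),
        (L σ) '' {g | ∀ i, 0 ≤ g i} := by
    ext p
    simp only [Set.mem_setOf_eq, Set.mem_iUnion, Set.mem_image]
    constructor
    · rintro ⟨y, hy, rfl⟩
      obtain ⟨σ, z, hz0, hzsupp, hBz, hLI⟩ :=
        cone_carath B (Finset.filter (fun i => y i ≠ 0) Finset.univ).card y hy le_rfl
      refine ⟨σ, hLI, fun i => z (i : Fin m), fun i => hz0 _, ?_⟩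
      rw [← hBz]
      funext r
      rw [hLval]
      show _ = ∑ j, B r j * z j
      calc ∑ i : {x // x ∈ σ}, z (i : Fin m) * B r (i : Fin m)
          = ∑ j ∈ σ, z j * B r j := Finset.sum_coe_sort σ (fun j => z j * B r j)
        _ = ∑ j, B r j * z j := by
            rw [Finset.sum_subset (Finset.subset_univ σ)
              (fun j _ hj => by simp [hzsupp j hj])]
            exact Finset.sum_congr rfl fun j _ => mul_comm _ _
    · rintro ⟨σ, hLI, g, hg, rfl⟩
      refine ⟨fun j => if h : j ∈ σ then g ⟨j, h⟩ else 0, ?_, ?_⟩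
      · intro j
        by_cases h : j ∈ σ
        · simpa [h] using hg ⟨j, h⟩
        · simp [h]
      · funext r
        rw [hLval]
        show ∑ j, B r j * _ = _
        calc ∑ j, B r j * (if h : j ∈ σ then g ⟨j, h⟩ else 0)
            = ∑ j ∈ σ, B r j * (if h : j ∈ σ then g ⟨j, h⟩ else 0) :=
              (Finset.sum_subset (Finset.subset_univ σ)
                (fun j _ hj => by simp [hj])).symm
          _ = ∑ i : {x // x ∈ σ}, B r (i : Fin m) * (if h : (i : Fin m) ∈ σ then g ⟨i, h⟩ else 0) :=
              (Finset.sum_coe_sort σ (fun j => B r j * (if h : j ∈ σ then g ⟨j, h⟩ else 0))).symm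
          _ = ∑ i : {x // x ∈ σ}, g i * B r (i : Fin m) := by
              refine Finset.sum_congr rfl fun i _ => ?_
              simp [i.2, mul_comm]
  rw [key]
  refine isClosed_iUnion_of_finite fun σ => isClosed_iUnion_of_finite fun hLI => ?_
  have hker : LinearMap.ker (L σ) = ⊥ := by
    rw [LinearMap.ker_eq_bot']
    intro g hg
    exact funext (Fintype.linearIndependent_iff.mp hLI g hg)
  have hemb := LinearMap.isClosedEmbedding_of_injective (f := L σ) hker
  have hcl : IsClosed {g : {x // x ∈ σ} → ℝ | ∀ i, 0 ≤ g i} := by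
    have he : {g : {x // x ∈ σ} → ℝ | ∀ i, 0 ≤ g i} = ⋂ i, {g : {x // x ∈ σ} → ℝ | 0 ≤ g i} := by
      ext g; simp [Set.mem_iInter]
    rw [he]
    exact isClosed_iInter fun i => isClosed_le continuous_const (continuous_apply i)
  exact hemb.isClosedMap _ hcl


-- key identity: for the complementary-columns matrix
lemma isClosed_LCP_range {n : ℕ} (A : Matrix (Fin n) (Fin n) ℝ) :
    IsClosed {p : Fin n → ℝ | (SOL (fun x => A.mulVec x) p).Nonempty} := by
  classical
  -- B α has columns -A⬝eⱼ for j ∈ α and eⱼ for j ∉ α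
  let B : Finset (Fin n) → Matrix (Fin n) (Fin n) ℝ := fun α =>
    Matrix.of fun i j => if j ∈ α then -A i j else (if i = j then 1 else 0)
  have hBmul : ∀ (α : Finset (Fin n)) (y : Fin n → ℝ) (i : Fin n),
      (B α).mulVec y i = -(A.mulVec (fun j => if j ∈ α then y j else 0) i)
        + (if i ∈ α then 0 else y i) := by
    intro α y i
    show ∑ j, (B α i j) * y j = _
    have hterm : ∀ j, (B α i j) * y j
        = -(A i j * (if j ∈ α then y j else 0))
          + (if i = j then 1 else 0) * (if j ∈ α then 0 else y j) := by
      intro j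
      by_cases h : j ∈ α <;> simp [B, h, mul_comm]
    rw [Finset.sum_congr rfl fun j _ => hterm j, Finset.sum_add_distrib]
    congr 1
    · have hmv : A.mulVec (fun j => if j ∈ α then y j else 0) i
          = ∑ x, A i x * (if x ∈ α then y x else 0) := rfl
      rw [hmv, ← Finset.sum_neg_distrib]
    · have hterm2 : ∀ x, (if i = x then (1:ℝ) else 0) * (if x ∈ α then 0 else y x)
          = if x = i then (if i ∈ α then 0 else y i) else 0 := by
        intro x
        by_cases hx : x = i
        · subst hx; by_cases h : x ∈ α <;> simp [h]
        · simp [Ne.symm hx, hx]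
      rw [Finset.sum_congr rfl fun x _ => hterm2 x,
        Finset.sum_ite_eq' Finset.univ i (fun _ => if i ∈ α then 0 else y i)]
      simp
  have key : {p : Fin n → ℝ | (SOL (fun x => A.mulVec x) p).Nonempty} =
      ⋃ (α : Finset (Fin n)), {p | ∃ y, (∀ i, 0 ≤ y i) ∧ (B α).mulVec y = p} := by
    ext p
    simp only [Set.mem_setOf_eq, Set.mem_iUnion]
    constructor
    · rintro ⟨x, hx0, hw0, hsum⟩
      set w : Fin n → ℝ := fun i => A.mulVec x i + p i with hw
      have hcomp : ∀ i, x i * w i = 0 := by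
        have := (Finset.sum_eq_zero_iff_of_nonneg
          (fun i _ => mul_nonneg (hx0 i) (hw0 i))).mp hsum
        exact fun i => this i (Finset.mem_univ i)
      set α : Finset (Fin n) := Finset.filter (fun i => x i ≠ 0) Finset.univ with hα
      refine ⟨α, fun j => if j ∈ α then x j else w j, ?_, ?_⟩
      · intro j; by_cases h : j ∈ α <;> simp [h, hx0 j, hw0 j, hw]
      · funext i
        rw [hBmul]
        have hx' : (fun j => if j ∈ α then (if j ∈ α then x j else w j) else 0) = x := by
          funext j
          by_cases h : j ∈ α
          · simp [h]
          · simp only [h, if_neg, if_false]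
            simp only [hα, Finset.mem_filter, Finset.mem_univ, true_and, not_not] at h
            exact h.symm
        rw [hx']
        by_cases h : i ∈ α
        · have hxi : x i ≠ 0 := by simpa [hα] using h
          have hwi : w i = 0 := by
            rcases mul_eq_zero.mp (hcomp i) with h' | h'
            · exact absurd h' hxi
            · exact h'
          simp only [h, if_pos]
          have : A.mulVec x i + p i = 0 := hwi
          linarith
        · simp only [h, if_neg, if_false]
          have : w i = A.mulVec x i + p i := rfl
          simp only [hw]
          ring
    · rintro ⟨α, y, hy0, hyp⟩
      set x : Fin n → ℝ := fun j => if j ∈ α then y j else 0 with hx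
      set w : Fin n → ℝ := fun j => if j ∈ α then 0 else y j with hwdef
      have hp : ∀ i, p i = -(A.mulVec x i) + w i := by
        intro i
        rw [← hyp, hBmul]
      refine ⟨x, ?_, ?_, ?_⟩
      · intro i; by_cases h : i ∈ α <;> simp [hx, h, hy0 i]
      · intro i
        have : A.mulVec x i + p i = w i := by rw [hp i]; ring
        rw [this]
        by_cases h : i ∈ α <;> simp [hwdef, h, hy0 i]
      · refine Finset.sum_eq_zero fun i _ => ?_
        have : A.mulVec x i + p i = w i := by rw [hp i]; ring
        rw [this]
        by_cases h : i ∈ α <;> simp [hx, hwdef, h]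
  rw [key]
  exact isClosed_iUnion_of_finite fun α => isClosed_cone (B α)


theorem stmt_6 {n k : ℕ} (hk : Odd k) (A : Matrix (Fin n) (Fin n) ℝ) :
    IsClosed {q : Fin n → ℝ | (SOL (fun x i => A.mulVec x i ^ k) q).Nonempty} := by
  have hk0 : k ≠ 0 := by rintro rfl; simpa using hk
  have hmono : StrictMono fun a : ℝ => a ^ k := Odd.strictMono_pow hk
  have hsurj : Function.Surjective fun a : ℝ => a ^ k := by
    have htop : Filter.Tendsto (fun x : ℝ => x ^ k) Filter.atTop Filter.atTop :=
      Filter.tendsto_pow_atTop hk0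
    have h1 : Filter.Tendsto (fun x : ℝ => -((-x) ^ k)) Filter.atBot Filter.atBot :=
      Filter.tendsto_neg_atTop_atBot.comp
        (htop.comp Filter.tendsto_neg_atBot_atTop)
    have hbot : Filter.Tendsto (fun x : ℝ => x ^ k) Filter.atBot Filter.atBot := by
      convert h1 using 1
      funext x
      rw [hk.neg_pow]
      ring
    exact (continuous_pow k).surjective htop hbot
  let e : ℝ ≃o ℝ := StrictMono.orderIsoOfSurjective _ hmono hsurj
  have he : ∀ a : ℝ, e a = a ^ k := fun _ => rfl
  have heinv : ∀ b : ℝ, (e.symm b) ^ k = b := fun b => by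
    rw [← he]; exact e.apply_symm_apply b
  -- the substitution map
  let φ : (Fin n → ℝ) → (Fin n → ℝ) := fun q i => -(e.symm (-q i))
  have hφc : Continuous φ := by
    refine continuous_pi fun i => ?_
    exact (e.symm.continuous.comp ((continuous_apply i).neg)).neg
  have hSOL : ∀ q : Fin n → ℝ,
      SOL (fun x i => A.mulVec x i ^ k) q = SOL (fun x => A.mulVec x) (φ q) := by
    intro q
    have h1 : ∀ a b : ℝ, (0 ≤ a ^ k + b ↔ 0 ≤ a + -(e.symm (-b))) := by
      intro a b
      constructor
      · intro h
        have : (e.symm (-b)) ^ k ≤ a ^ k := by rw [heinv]; linarith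
        have := (hmono.le_iff_le).mp this
        linarith
      · intro h
        have : e.symm (-b) ≤ a := by linarith
        have := hmono.le_iff_le.mpr this
        rw [heinv] at this
        linarith
    have h2 : ∀ a b : ℝ, (a ^ k + b = 0 ↔ a + -(e.symm (-b)) = 0) := by
      intro a b
      constructor
      · intro h
        have : a ^ k = (e.symm (-b)) ^ k := by rw [heinv]; linarith
        have := hmono.injective this
        linarith
      · intro h
        have ha : a = e.symm (-b) := by linarith
        rw [ha, heinv]; ring
    ext x
    simp only [SOL, Set.mem_setOf_eq]
    constructor
    · rintro ⟨hx, hw, hs⟩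
      refine ⟨hx, fun i => (h1 _ _).mp (hw i), ?_⟩
      have hterms := (Finset.sum_eq_zero_iff_of_nonneg
        (fun i _ => mul_nonneg (hx i) (hw i))).mp hs
      refine Finset.sum_eq_zero fun i _ => ?_
      rcases mul_eq_zero.mp (hterms i (Finset.mem_univ i)) with h | h
      · rw [h, zero_mul]
      · rw [(h2 _ _).mp h, mul_zero]
    · rintro ⟨hx, hw, hs⟩
      refine ⟨hx, fun i => (h1 _ _).mpr (hw i), ?_⟩
      have hterms := (Finset.sum_eq_zero_iff_of_nonneg
        (fun i _ => mul_nonneg (hx i) (hw i))).mp hs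
      refine Finset.sum_eq_zero fun i _ => ?_
      rcases mul_eq_zero.mp (hterms i (Finset.mem_univ i)) with h | h
      · rw [h, zero_mul]
      · rw [(h2 _ _).mpr h, mul_zero]
  have hset : {q : Fin n → ℝ | (SOL (fun x i => A.mulVec x i ^ k) q).Nonempty}
      = φ ⁻¹' {p : Fin n → ℝ | (SOL (fun x => A.mulVec x) p).Nonempty} := by
    ext q
    simp only [Set.mem_setOf_eq, Set.mem_preimage, hSOL q]
  rw [hset]
  exact (isClosed_LCP_range A).preimage hφc
end

section
/- Let A ∈ ℝ^{n×n}, let k be an odd natural number, and define G : ℝⁿ → ℝⁿ by G(x) = (Ax)^{[k]}. If A is an R₀-matrix (i.e., SOL(A,0) = {0}), then SOL(G,0) = {0}. If A is an R-matrix (i.e., additionally SOL(A,d) = {0} for some d ∈ ℝⁿ with d > 0), then SOL(G,0) = {0} and SOL(G,d') = {0} for some d' ∈ ℝⁿ with d' > 0. -/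
open Finset

theorem helper {n k : ℕ} (hk : Odd k) (A : Matrix (Fin n) (Fin n) ℝ)
    (q : Fin n → ℝ) (hq : ∀ i, 0 ≤ q i)
    (h : SOL (fun x => A.mulVec x) q = {0}) :
    SOL (fun x i => A.mulVec x i ^ k) (fun i => q i ^ k) = {0} := by
  ext x
  simp only [Set.mem_singleton_iff]
  constructor
  · rintro ⟨hx, hge, hsum⟩
    have key : ∀ i, A.mulVec x i + q i ≥ 0 ∧ x i * (A.mulVec x i ^ k + q i ^ k) = 0 := by
      intro i
      have h1 : (-(q i)) ^ k ≤ A.mulVec x i ^ k := by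
        rw [hk.neg_pow]; linarith [hge i]
      have h2 : -(q i) ≤ A.mulVec x i := (hk.strictMono_pow (R := ℝ)).le_iff_le.mp h1
      refine ⟨by linarith, ?_⟩
      have := (Finset.sum_eq_zero_iff_of_nonneg (fun i _ =>
        mul_nonneg (hx i) (by linarith [hge i]))).mp hsum i (mem_univ i)
      exact this
    have hxsol : x ∈ SOL (fun x => A.mulVec x) q := by
      refine ⟨hx, fun i => (key i).1, Finset.sum_eq_zero fun i _ => ?_⟩
      rcases mul_eq_zero.mp (key i).2 with h0 | h0
      · rw [h0, zero_mul]
      · have : A.mulVec x i ^ k = (-(q i)) ^ k := by rw [hk.neg_pow]; linarith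
        have := (hk.strictMono_pow (R := ℝ)).injective this
        show x i * (A.mulVec x i + q i) = 0; rw [this]; ring
    have := h ▸ hxsol; exact this
  · rintro rfl
    refine ⟨fun i => le_refl 0, fun i => ?_, ?_⟩
    · simp [Matrix.mulVec_zero, zero_pow hk.pos.ne', pow_nonneg (hq i)]
    · simp

theorem stmt_7 {n k : ℕ} (hk : Odd k) (A : Matrix (Fin n) (Fin n) ℝ) :
    (SOL (fun x => A.mulVec x) 0 = {0} → SOL (fun x i => A.mulVec x i ^ k) 0 = {0}) ∧
    ((SOL (fun x => A.mulVec x) 0 = {0} ∧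
        ∃ d : Fin n → ℝ, (∀ i, 0 < d i) ∧ SOL (fun x => A.mulVec x) d = {0}) →
      SOL (fun x i => A.mulVec x i ^ k) 0 = {0} ∧
        ∃ d' : Fin n → ℝ, (∀ i, 0 < d' i) ∧ SOL (fun x i => A.mulVec x i ^ k) d' = {0}) := by
  have hz : ∀ h : SOL (fun x => A.mulVec x) 0 = {0},
      SOL (fun x i => A.mulVec x i ^ k) 0 = {0} := by
    intro h
    have := helper hk A 0 (fun i => le_refl 0) h
    have e : (fun i : Fin n => (0 : Fin n → ℝ) i ^ k) = (0 : Fin n → ℝ) := by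
      funext i; simp [zero_pow hk.pos.ne']
    rwa [e] at this
  refine ⟨hz, ?_⟩
  rintro ⟨h0, d, hd, hdsol⟩
  exact ⟨hz h0, fun i => d i ^ k, fun i => pow_pos (hd i) k,
    helper hk A d (fun i => (hd i).le) hdsol⟩
end

section
/- Let A ∈ ℝ^{n×n}, let k be an odd natural number, and define G : ℝⁿ → ℝⁿ by G(x) = (Ax)^{[k]}. If A is a Q-matrix (i.e., SOL(A,q) ≠ ∅ for every q ∈ ℝⁿ), then SOL(G,q) ≠ ∅ for every q ∈ ℝⁿ. -/
open Finset

theorem stmt_8 {n k : ℕ} (hk : Odd k) (A : Matrix (Fin n) (Fin n) ℝ)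
    (hQ : ∀ q : Fin n → ℝ, (SOL (fun x => A.mulVec x) q).Nonempty) :
    ∀ q : Fin n → ℝ, (SOL (fun x i => A.mulVec x i ^ k) q).Nonempty := by
  intro q
  have hk0 : (k : ℝ) ≠ 0 := Nat.cast_ne_zero.mpr hk.pos.ne'
  set rt : ℝ → ℝ := fun t => Real.sign t * |t| ^ ((k : ℝ)⁻¹) with hrt
  have hroot : ∀ t, rt t ^ k = t := by
    intro t
    have habs : ∀ s : ℝ, 0 ≤ s → (s ^ ((k:ℝ)⁻¹)) ^ k = s := by
      intro s hs
      rw [← Real.rpow_natCast (s ^ ((k:ℝ)⁻¹)) k, ← Real.rpow_mul hs,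
        inv_mul_cancel₀ hk0, Real.rpow_one]
    rcases lt_trichotomy t 0 with h | h | h
    · rw [hrt]
      simp only [Real.sign_of_neg h, abs_of_neg h]
      rw [neg_one_mul, hk.neg_pow, habs _ (by linarith), neg_neg]
    · simp [hrt, h, Real.sign_zero, zero_pow hk.pos.ne']
    · rw [hrt]
      simp only [Real.sign_of_pos h, abs_of_pos h, one_mul]
      exact habs _ h.le
  obtain ⟨x, hx, hge, hsum⟩ := hQ (fun i => rt (q i))
  have hterm : ∀ i ∈ univ, x i * (A.mulVec x i + rt (q i)) = 0 := by
    rw [← Finset.sum_eq_zero_iff_of_nonneg]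
    · exact hsum
    · exact fun i _ => mul_nonneg (hx i) (hge i)
  refine ⟨x, hx, fun i => ?_, ?_⟩
  · simp only []
    have h1 : -rt (q i) ≤ A.mulVec x i := by linarith [hge i]
    have := (hk.strictMono_pow (R := ℝ)).monotone h1
    rw [hk.neg_pow, hroot] at this
    linarith
  · apply Finset.sum_eq_zero
    intro i _
    rcases mul_eq_zero.mp (hterm i (mem_univ i)) with h | h
    · rw [h, zero_mul]
    · have : A.mulVec x i = -rt (q i) := by linarith
      simp only []
      rw [this, hk.neg_pow, hroot]
      ring
end

section
/- Let F : ℝⁿ → ℝⁿ be a homogeneous polynomial map of degree m−1 with m > 2, let e ∈ ℝⁿ be the vector of all ones, let d := −F(e) − e, let D be the diagonal matrix with diagonal d, and define f(x) := F(x) + Dx. Then both 0 and e belong to SOL(f, e); in particular, PCP(f, e) has at least two solutions. -/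
open Finset

theorem stmt_13 {n m : ℕ} (hm : 2 < m)
    (F : (Fin n → ℝ) → (Fin n → ℝ))
    (hF : IsHomogPolyMap F (m - 1)) :
    let e : Fin n → ℝ := fun _ => 1
    let d : Fin n → ℝ := fun i => -F e i - 1
    let f : (Fin n → ℝ) → (Fin n → ℝ) := fun x i => F x i + d i * x i
    (0 : Fin n → ℝ) ∈ SOL f e ∧ e ∈ SOL f e := by
  intro e d f
  obtain ⟨P, hP, hhom⟩ := hF
  have hF0 : ∀ i, F 0 i = 0 := by
    intro i
    rw [hP 0 i]
    have h0 : MvPolynomial.coeff 0 (P i) = 0 := by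
      apply (hhom i).coeff_eq_zero
      simp
      omega
    simpa [MvPolynomial.eval_zero, MvPolynomial.constantCoeff_eq, MvPolynomial.coeff] using h0
  constructor
  · refine ⟨fun i => le_refl 0, fun i => ?_, ?_⟩
    · simp [f, e, hF0 i]
    · simp
  · refine ⟨fun i => zero_le_one, fun i => ?_, ?_⟩
    · simp [f, e, d]; ring_nf; simp
    · apply Finset.sum_eq_zero
      intro i _
      simp [f, e, d]; ring
end

section
/- On ℝ², let F(x, y) = (x² − y² − (x−y)², x² − y² + 2(x−y)²). Then the set D := {q ∈ ℝ² : SOL(F, q) ≠ ∅} is not closed. Specifically, for every natural number k ≥ 1 the point (k + 1/(2k), k) belongs to SOL(F, q_k) where q_k = (−1, −1 − 3/(4k²)), the points q_k converge to q = (−1, −1), and SOL(F, (−1, −1)) = ∅. -/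
open Finset

/-- The map of Example 3 of the paper. -/
def Fex : (Fin 2 → ℝ) → (Fin 2 → ℝ) := fun x =>
  ![x 0 ^ 2 - x 1 ^ 2 - (x 0 - x 1) ^ 2, x 0 ^ 2 - x 1 ^ 2 + 2 * (x 0 - x 1) ^ 2]

theorem stmt_18 :
    ¬ IsClosed {q : Fin 2 → ℝ | (SOL Fex q).Nonempty} ∧
    (∀ k : ℕ, 1 ≤ k →
      (![(k : ℝ) + 1 / (2 * (k : ℝ)), (k : ℝ)]) ∈
        SOL Fex ![(-1 : ℝ), -1 - 3 / (4 * (k : ℝ) ^ 2)]) ∧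
    Filter.Tendsto (fun k : ℕ => ![(-1 : ℝ), -1 - 3 / (4 * (k : ℝ) ^ 2)])
      Filter.atTop (nhds ![(-1 : ℝ), -1]) ∧
    SOL Fex ![(-1 : ℝ), -1] = ∅ := by
  have hsol : ∀ k : ℕ, 1 ≤ k →
      (![(k : ℝ) + 1 / (2 * (k : ℝ)), (k : ℝ)]) ∈
        SOL Fex ![(-1 : ℝ), -1 - 3 / (4 * (k : ℝ) ^ 2)] := by
    intro k hk
    have hk0 : (0:ℝ) < (k:ℝ) := by exact_mod_cast hk
    have hk0' : (k:ℝ) ≠ 0 := ne_of_gt hk0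
    have h1 : Fex ![(k : ℝ) + 1 / (2 * (k : ℝ)), (k : ℝ)] 0 + (-1 : ℝ) = 0 := by
      simp only [Fex, Matrix.cons_val_zero, Matrix.cons_val_one, Matrix.head_cons]
      field_simp
      ring
    have h2 : Fex ![(k : ℝ) + 1 / (2 * (k : ℝ)), (k : ℝ)] 1
        + (-1 - 3 / (4 * (k : ℝ) ^ 2)) = 0 := by
      simp only [Fex, Matrix.cons_val_zero, Matrix.cons_val_one, Matrix.head_cons]
      field_simp
      ring
    refine ⟨?_, ?_, ?_⟩
    · intro i
      fin_cases i <;> simp <;> positivity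
    · intro i
      fin_cases i <;> simp only [Matrix.cons_val_zero, Matrix.cons_val_one, Matrix.head_cons]
      · exact le_of_eq h1.symm
      · exact le_of_eq h2.symm
    · rw [Fin.sum_univ_two]
      rw [show ((![(-1 : ℝ), -1 - 3 / (4 * (k : ℝ) ^ 2)]) 0) = (-1:ℝ) from rfl,
        show ((![(-1 : ℝ), -1 - 3 / (4 * (k : ℝ) ^ 2)]) 1) = (-1 - 3 / (4 * (k : ℝ) ^ 2)) from rfl,
        h1, h2]
      ring
  have hempty : SOL Fex ![(-1 : ℝ), -1] = ∅ := by
    rw [Set.eq_empty_iff_forall_notMem]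
    rintro x ⟨hx, hF, hsum⟩
    have hF0 := hF 0
    have hF1 := hF 1
    simp only [Fex, Matrix.cons_val_zero, Matrix.cons_val_one, Matrix.head_cons] at hF0 hF1
    rw [Fin.sum_univ_two] at hsum
    simp only [Fex, Matrix.cons_val_zero, Matrix.cons_val_one, Matrix.head_cons] at hsum
    have hx0 := hx 0
    have hx1 := hx 1
    -- from hF0 : 0 ≤ x0² - x1² - (x0-x1)² - 1, deduce x1 < x0
    have hlt : x 1 < x 0 := by nlinarith [sq_nonneg (x 0 - x 1)]
    have hpos0 : 0 < x 0 := lt_of_le_of_lt hx1 hlt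
    -- both summands nonneg and sum zero
    have hz0 : x 0 * (x 0 ^ 2 - x 1 ^ 2 - (x 0 - x 1) ^ 2 + -1) = 0 := by
      nlinarith [mul_nonneg hx0 hF0, mul_nonneg hx1 hF1]
    have hFeq : x 0 ^ 2 - x 1 ^ 2 - (x 0 - x 1) ^ 2 + -1 = 0 := by
      rcases mul_eq_zero.mp hz0 with h | h
      · exact absurd h (ne_of_gt hpos0)
      · exact h
    have hz1 : x 1 * (x 0 ^ 2 - x 1 ^ 2 + 2 * (x 0 - x 1) ^ 2 + -1) = 0 := by
      nlinarith [mul_nonneg hx0 hF0, mul_nonneg hx1 hF1]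
    have hx1z : x 1 = 0 := by
      rcases mul_eq_zero.mp hz1 with h | h
      · exact h
      · nlinarith [sq_nonneg (x 0 - x 1), sub_pos.mpr hlt]
    nlinarith [hFeq, hx1z]
  have htend : Filter.Tendsto (fun k : ℕ => ![(-1 : ℝ), -1 - 3 / (4 * (k : ℝ) ^ 2)])
      Filter.atTop (nhds ![(-1 : ℝ), -1]) := by
    rw [tendsto_pi_nhds]
    intro i
    fin_cases i
    · simp only [Matrix.cons_val_zero]; exact tendsto_const_nhds
    · simp only [Matrix.cons_val_one, Matrix.head_cons]
      have hden : Filter.Tendsto (fun k : ℕ => 4 * (k : ℝ) ^ 2) Filter.atTop Filter.atTop := by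
        apply Filter.Tendsto.const_mul_atTop (by norm_num : (0:ℝ) < 4)
        exact (Filter.tendsto_pow_atTop (by norm_num : 2 ≠ 0)).comp tendsto_natCast_atTop_atTop
      have h0 : Filter.Tendsto (fun k : ℕ => 3 / (4 * (k : ℝ) ^ 2)) Filter.atTop (nhds 0) :=
        Filter.Tendsto.div_atTop tendsto_const_nhds hden
      have := (tendsto_const_nhds : Filter.Tendsto (fun _ : ℕ => (-1:ℝ)) Filter.atTop _).sub h0
      simpa using this
  refine ⟨?_, hsol, htend, hempty⟩
  intro hC
  have hmem : ![(-1 : ℝ), -1] ∈ {q : Fin 2 → ℝ | (SOL Fex q).Nonempty} := by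
    apply hC.mem_of_tendsto htend
    filter_upwards [Filter.eventually_ge_atTop 1] with k hk
    exact ⟨_, hsol k hk⟩
  rw [Set.mem_setOf_eq, hempty] at hmem
  exact Set.not_nonempty_empty hmem
end

section
/- Let f : ℝⁿ → ℝⁿ be continuous with the Q-property, i.e., SOL(f, p) ≠ ∅ for every p ∈ ℝⁿ. Then for every q ∈ ℝⁿ, the set {x ∈ ℝⁿ : x ≥ 0 and f(x) + q ≥ 0} has a Slater point: there exists u ∈ ℝⁿ with u > 0 (all components positive) and f(u) + q > 0 (all components positive). -/
open Finset

theorem stmt_19 {n : ℕ} (f : (Fin n → ℝ) → (Fin n → ℝ)) (hf : Continuous f)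
    (hQ : ∀ p : Fin n → ℝ, (SOL f p).Nonempty) (q : Fin n → ℝ) :
    ∃ u : Fin n → ℝ, (∀ i, 0 < u i) ∧ ∀ i, 0 < f u i + q i := by
  obtain ⟨x, hx0, hxg, -⟩ := hQ (q - 1)
  have hpos : ∀ i, 0 < f x i + q i := by
    intro i
    have := hxg i
    simp only [Pi.sub_apply, Pi.one_apply] at this
    linarith
  -- consider h : ℝ → Fin n → ℝ, t ↦ f (x + const t) + q
  have hcont : Continuous fun t : ℝ => f (x + fun _ => t) := by
    apply hf.comp
    exact continuous_const.add (continuous_pi fun i => continuous_id)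
  have hU : IsOpen {t : ℝ | ∀ i, 0 < f (x + fun _ => t) i + q i} := by
    have : {t : ℝ | ∀ i, 0 < f (x + fun _ => t) i + q i} =
        ⋂ i, {t : ℝ | 0 < f (x + fun _ => t) i + q i} := by
      ext t; simp
    rw [this]
    apply isOpen_iInter_of_finite
    intro i
    exact isOpen_lt continuous_const (((continuous_apply i).comp hcont).add continuous_const)
  have h0 : (0 : ℝ) ∈ {t : ℝ | ∀ i, 0 < f (x + fun _ => t) i + q i} := by
    intro i
    have hx : (x + fun _ => (0:ℝ)) = x := by funext j; simp
    rw [hx]; exact hpos i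
  obtain ⟨δ, hδ, hball⟩ := Metric.isOpen_iff.mp hU 0 h0
  have hmem : (δ / 2 : ℝ) ∈ {t : ℝ | ∀ i, 0 < f (x + fun _ => t) i + q i} := by
    apply hball
    rw [Metric.mem_ball, Real.dist_eq, sub_zero, abs_of_nonneg (by linarith : (0:ℝ) ≤ δ / 2)]
    linarith
  refine ⟨x + fun _ => δ / 2, ?_, hmem⟩
  intro i
  have := hx0 i
  have : 0 < x i + δ / 2 := by linarith
  simpa using this
end
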